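/- Let θ ∈ ℝ with θ ∉ πℚ. Then for any positive integers M and N, and any nonempty open interval I ⊂ (0, 2π), there exist positive integers m and q with m > N such that pv((m+j)qθ) ∈ I for all j ∈ {1, …, M}; i.e., M consecutive terms of the arithmetic progression (m+j)qθ all have principal values in I. -/

import Mathlib

open Real

noncomputable def pv (θ : ℝ) : ℝ := θ - 2 * π * ⌊θ / (2 * π)⌋

private lemma aux_step (γ : ℝ) (n i : ℕ) (hγ : 0 ≤ γ)
    (h : Int.fract ((n : ℝ) * γ) + i * γ < 1) :
    Int.fract (((n + i : ℕ) : ℝ) * γ) = Int.fract ((n : ℝ) * γ) + i * γ := by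
  rw [Int.fract_eq_iff]
  refine ⟨add_nonneg (Int.fract_nonneg _) (by positivity), h, ⟨⌊(n : ℝ) * γ⌋, ?_⟩⟩
  have h2 := Int.self_sub_fract ((n : ℝ) * γ)
  push_cast
  linarith

private lemma aux_wrap {γ : ℝ} (hirr : Irrational γ) (h0 : 0 < γ) (h1 : γ < 1) (t : ℕ) :
    ∃ n : ℕ, t ≤ n ∧ 0 < Int.fract ((n : ℝ) * γ) ∧ Int.fract ((n : ℝ) * γ) < γ := by
  set k : ℕ := ⌊(t : ℝ) * γ⌋.toNat + 1 with hk
  have hfl0 : (0 : ℤ) ≤ ⌊(t : ℝ) * γ⌋ := Int.floor_nonneg.mpr (by positivity)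
  have hkc : (k : ℝ) = (⌊(t : ℝ) * γ⌋ : ℝ) + 1 := by
    have h2 : ((⌊(t : ℝ) * γ⌋.toNat : ℕ) : ℝ) = (⌊(t : ℝ) * γ⌋ : ℝ) := by
      exact_mod_cast Int.toNat_of_nonneg hfl0
    rw [hk, Nat.cast_add, Nat.cast_one, h2]
  have htk : (t : ℝ) * γ < k := by rw [hkc]; exact Int.lt_floor_add_one _
  have hk1 : 1 ≤ (k : ℝ) := by rw [hkc]; push_cast; linarith [(by exact_mod_cast hfl0 : (0:ℝ) ≤ (⌊(t : ℝ) * γ⌋ : ℝ))]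
  have hkirr : Irrational ((k : ℝ) / γ) := by
    rw [div_eq_mul_inv]
    exact hirr.inv.natCast_mul (by omega)
  have hfl2 : (0 : ℤ) ≤ ⌊(k : ℝ) / γ⌋ := Int.floor_nonneg.mpr (by positivity)
  set n : ℕ := ⌊(k : ℝ) / γ⌋.toNat + 1 with hn
  have hnc : (n : ℝ) = (⌊(k : ℝ) / γ⌋ : ℝ) + 1 := by
    have h2 : ((⌊(k : ℝ) / γ⌋.toNat : ℕ) : ℝ) = (⌊(k : ℝ) / γ⌋ : ℝ) := by
      exact_mod_cast Int.toNat_of_nonneg hfl2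
    rw [hn, Nat.cast_add, Nat.cast_one, h2]
  have hlow : (k : ℝ) < n * γ := by
    have h2 : (k : ℝ) / γ < n := by rw [hnc]; exact Int.lt_floor_add_one _
    calc (k : ℝ) = (k : ℝ) / γ * γ := by field_simp
    _ < n * γ := by exact mul_lt_mul_of_pos_right h2 h0
  have hhigh : (n : ℝ) * γ < k + γ := by
    have hfs : ((⌊(k : ℝ) / γ⌋ : ℝ)) < (k : ℝ) / γ := by
      rcases lt_or_eq_of_le (Int.floor_le ((k : ℝ) / γ)) with h | h
      · exact h
      · exact absurd h.symm (hkirr.ne_int _)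
    have : ((⌊(k : ℝ) / γ⌋ : ℝ)) * γ < k := by
      calc ((⌊(k : ℝ) / γ⌋ : ℝ)) * γ < (k : ℝ) / γ * γ := mul_lt_mul_of_pos_right hfs h0
      _ = k := by field_simp
    rw [hnc]; nlinarith
  have hfr : Int.fract ((n : ℝ) * γ) = (n : ℝ) * γ - k := by
    rw [Int.fract_eq_iff]
    refine ⟨by linarith, by linarith, ⟨(k : ℤ), by push_cast; ring⟩⟩
  refine ⟨n, ?_, by rw [hfr]; linarith, by rw [hfr]; linarith⟩
  by_contra hcon
  push_neg at hcon
  have : (n : ℝ) * γ < (t : ℝ) * γ := by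
    exact mul_lt_mul_of_pos_right (by exact_mod_cast hcon) h0
  linarith

private lemma aux_hit {γ u' δ : ℝ} (hirr : Irrational γ) (h0 : 0 < γ) (hγδ : γ < δ)
    (hu : 0 ≤ u') (huδ : u' + δ ≤ 1) (t : ℕ) :
    ∃ n : ℕ, t ≤ n ∧ u' < Int.fract ((n : ℝ) * γ) ∧ Int.fract ((n : ℝ) * γ) < u' + δ := by
  have h1 : γ < 1 := by linarith
  obtain ⟨n₀, hn₀t, hpos, hlt⟩ := aux_wrap hirr h0 h1 t
  by_cases hc : u' < Int.fract ((n₀ : ℝ) * γ)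
  · exact ⟨n₀, hn₀t, hc, by linarith⟩
  push_neg at hc
  have key : ∀ i : ℕ, (∀ i' < i, Int.fract (((n₀ + i' : ℕ) : ℝ) * γ) ≤ u') →
      Int.fract ((n₀ : ℝ) * γ) + i * γ < 1 := by
    intro i
    induction i with
    | zero => intro _; simpa using lt_of_le_of_lt hc (by linarith)
    | succ i ih =>
      intro h
      have hi : Int.fract ((n₀ : ℝ) * γ) + i * γ < 1 := ih (fun i' hi' => h i' (by omega))
      have hst := aux_step γ n₀ i h0.le hi
      have hle : Int.fract ((n₀ : ℝ) * γ) + i * γ ≤ u' := hst ▸ h i (by omega)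
      push_cast
      linarith
  have hS : ∃ i : ℕ, u' < Int.fract (((n₀ + i : ℕ) : ℝ) * γ) := by
    by_contra hall
    push_neg at hall
    obtain ⟨I, hI⟩ := exists_nat_gt (u' / γ)
    have h1' := key I (fun i' _ => hall i')
    have hst := aux_step γ n₀ I h0.le h1'
    have hIγ : u' < I * γ := (div_lt_iff₀ h0).mp hI
    have := hall I
    rw [hst] at this
    linarith
  set i := Nat.find hS with hidef
  have hifind : u' < Int.fract (((n₀ + i : ℕ) : ℝ) * γ) := Nat.find_spec hS
  have hmin : ∀ i' < i, Int.fract (((n₀ + i' : ℕ) : ℝ) * γ) ≤ u' :=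
    fun i' hi' => le_of_not_gt (Nat.find_min hS hi')
  have hkey := key i hmin
  have hstep := aux_step γ n₀ i h0.le hkey
  have hipos : i ≠ 0 := by
    intro h
    rw [h] at hifind
    simp at hifind
    linarith
  clear_value i
  obtain ⟨i', rfl⟩ : ∃ i', i = i' + 1 := ⟨i - 1, by omega⟩
  have hkey' := key i' (fun i'' hi'' => hmin i'' (by omega))
  have hstep' := aux_step γ n₀ i' h0.le hkey'
  have hprev : Int.fract ((n₀ : ℝ) * γ) + i' * γ ≤ u' :=
    hstep' ▸ hmin i' (by omega)
  refine ⟨n₀ + (i' + 1), by omega, hifind, ?_⟩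
  rw [hstep]
  push_cast
  linarith

private lemma aux_small {α : ℝ} (hirr : Irrational α) {δ : ℝ} (hδ0 : 0 < δ) (hδ1 : δ < 1) :
    ∃ q : ℕ, 0 < q ∧ 0 < Int.fract ((q : ℝ) * α) ∧ Int.fract ((q : ℝ) * α) < δ := by
  obtain ⟨nn, hnn⟩ := exists_nat_one_div_lt hδ0
  obtain ⟨j, k, hk0, hkn, hjk⟩ := Real.exists_int_int_abs_mul_sub_le α (n := nn + 1) (Nat.succ_pos nn)
  set β := (k : ℝ) * α - j with hβ
  have hβirr : Irrational β := (hirr.intCast_mul (ne_of_gt hk0)).sub_intCast j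
  have hβ0 : β ≠ 0 := hβirr.ne_zero
  have hβδ : |β| < δ := by
    refine lt_of_le_of_lt hjk ?_
    have h2 : (1 : ℝ) / ((nn : ℝ) + 1 + 1) ≤ 1 / ((nn : ℝ) + 1) := by
      apply one_div_le_one_div_of_le (by positivity) (by linarith)
    calc (1 : ℝ) / (((nn + 1 : ℕ) : ℝ) + 1) = 1 / ((nn : ℝ) + 1 + 1) := by push_cast; ring_nf
    _ ≤ 1 / ((nn : ℝ) + 1) := h2
    _ < δ := hnn
  have hβ1 : |β| < 1 := hβδ.trans hδ1
  have habs1 := abs_lt.mp hβ1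
  have habsδ := abs_lt.mp hβδ
  have hktn : (k.toNat : ℝ) = (k : ℝ) := by
    exact_mod_cast Int.toNat_of_nonneg hk0.le
  rcases lt_or_gt_of_ne hβ0 with hneg | hpos
  · -- β < 0
    set s := -β with hs
    have hs0 : 0 < s := by simp [hs]; linarith
    have hsδ : s < δ := by simp [hs]; linarith
    have hs1 : s < 1 := by linarith
    have hsirr : Irrational s := hβirr.neg
    have h1s : 1 < 1 / s := by rw [lt_div_iff₀ hs0]; linarith
    have hfl : (1 : ℤ) ≤ ⌊1 / s⌋ := Int.le_floor.mpr (by exact_mod_cast h1s.le)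
    set K : ℕ := ⌊1 / s⌋.toNat with hKdef
    have hKc : (K : ℝ) = (⌊1 / s⌋ : ℝ) := by
      rw [hKdef]; exact_mod_cast Int.toNat_of_nonneg (by omega)
    have hK1 : 1 ≤ K := by
      have h2 : (1 : ℝ) ≤ (K : ℝ) := by rw [hKc]; exact_mod_cast hfl
      exact_mod_cast h2
    have hsinv : Irrational (1 / s) := by rw [one_div]; exact hsirr.inv
    have hKs1 : (K : ℝ) * s < 1 := by
      have hfs : ((⌊1 / s⌋ : ℝ)) < 1 / s := by
        rcases lt_or_eq_of_le (Int.floor_le (1 / s)) with h | h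
        · exact h
        · exact absurd h.symm (hsinv.ne_int _)
      calc (K : ℝ) * s < 1 / s * s := by
            rw [hKc]; exact mul_lt_mul_of_pos_right hfs hs0
      _ = 1 := by field_simp
    have hKs2 : 1 - s < (K : ℝ) * s := by
      have h2 : 1 / s < (K : ℝ) + 1 := by rw [hKc]; exact Int.lt_floor_add_one _
      have h3 : 1 / s * s < ((K : ℝ) + 1) * s := mul_lt_mul_of_pos_right h2 hs0
      rw [one_div_mul_cancel (ne_of_gt hs0)] at h3
      nlinarith
    have hktpos : 0 < k.toNat := by omega
    refine ⟨K * k.toNat, Nat.mul_pos hK1 hktpos, ?_, ?_⟩ <;>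
    · have hfr : Int.fract (((K * k.toNat : ℕ) : ℝ) * α) = 1 - (K : ℝ) * s := by
        rw [Int.fract_eq_iff]
        refine ⟨by linarith, by nlinarith, ⟨(K : ℤ) * j - 1, ?_⟩⟩
        have hkα : (k : ℝ) * α = (j : ℝ) + β := by rw [hβ]; ring
        push_cast [hktn]
        rw [mul_assoc, hkα, hs]
        ring
      rw [hfr]
      first
        | linarith
        | nlinarith
  · -- β > 0
    refine ⟨k.toNat, by omega, ?_, ?_⟩ <;>
    · have hfr : Int.fract ((k.toNat : ℝ) * α) = β := by
        rw [Int.fract_eq_iff]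
        refine ⟨by linarith, by linarith, ⟨j, ?_⟩⟩
        rw [hktn, hβ]; ring
      rw [hfr]
      linarith

set_option maxHeartbeats 1000000 in
theorem stmt17 (θ : ℝ) (hθ : ¬∃ r : ℚ, θ = r * π) (M N : ℕ) (hM : 0 < M) (hN : 0 < N) :
    ∀ u v : ℝ, 0 ≤ u → u < v → v ≤ 2 * π →
      ∃ m q : ℕ, N < m ∧ 0 < q ∧
        ∀ j ∈ Finset.Icc 1 M, pv (((m + j) * q : ℕ) * θ) ∈ Set.Ioo u v := by
  intro u v hu huv hv2
  have hπ : (0 : ℝ) < π := Real.pi_pos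
  have h2π : (0 : ℝ) < 2 * π := by linarith
  set α := θ / (2 * π) with hαdef
  have hθα : θ = α * (2 * π) := by rw [hαdef]; field_simp
  have hairr : Irrational α := by
    by_contra h
    rw [Irrational, not_not] at h
    obtain ⟨r, hr⟩ := h
    exact hθ ⟨2 * r, by rw [hθα, ← hr]; push_cast; ring⟩
  set u' := u / (2 * π) with hu'def
  set v' := v / (2 * π) with hv'def
  have hu'0 : 0 ≤ u' := div_nonneg hu h2π.le
  have huv' : u' < v' := by
    rw [hu'def, hv'def, div_lt_div_iff₀ h2π h2π]
    nlinarith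
  have hv'1 : v' ≤ 1 := by rw [hv'def, div_le_one h2π]; exact hv2
  set δ := (v' - u') / (M + 1) with hδdef
  have hM1 : (1 : ℝ) ≤ (M : ℝ) := by exact_mod_cast hM
  have hδ0 : 0 < δ := div_pos (by linarith) (by positivity)
  have hδe : δ * ((M : ℝ) + 1) = v' - u' := by
    rw [hδdef]; field_simp
  have hMδ : (M : ℝ) * δ < v' - u' := by nlinarith
  have hδle : δ ≤ v' - u' := by nlinarith
  have hδ1 : δ < 1 := by nlinarith
  clear_value α u' v' δ
  obtain ⟨q, hq0, hg0, hgδ, hgdef⟩ :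
      ∃ q : ℕ, 0 < q ∧ 0 < Int.fract ((q : ℝ) * α) ∧ Int.fract ((q : ℝ) * α) < δ ∧ True := by
    obtain ⟨q, h1, h2, h3⟩ := aux_small hairr hδ0 hδ1
    exact ⟨q, h1, h2, h3, trivial⟩
  set g := Int.fract ((q : ℝ) * α) with hg
  clear_value g
  have hgirr : Irrational g := by
    have h2 : Irrational ((q : ℝ) * α - (⌊(q : ℝ) * α⌋ : ℤ)) :=
      (hairr.natCast_mul hq0.ne').sub_intCast _
    rw [hg, Int.fract]
    exact h2
  obtain ⟨n, hnt, hnl, hnu⟩ := aux_hit hgirr hg0 hgδ hu'0 (by linarith) (N + 2)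
  refine ⟨n - 1, q, by omega, hq0, ?_⟩
  intro j hj
  rw [Finset.mem_Icc] at hj
  obtain ⟨hj1, hjM⟩ := hj
  obtain ⟨i, rfl⟩ : ∃ i, j = i + 1 := ⟨j - 1, by omega⟩
  have hnm : n - 1 + (i + 1) = n + i := by omega
  have hiM : (i : ℝ) ≤ (M : ℝ) - 1 := by
    have : (i : ℝ) + 1 ≤ (M : ℝ) := by exact_mod_cast hjM
    linarith
  have hig : 0 ≤ (i : ℝ) * g := by positivity
  have higδ : (i : ℝ) * g ≤ ((M : ℝ) - 1) * δ := by nlinarith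
  have hbound : Int.fract ((n : ℝ) * g) + (i : ℝ) * g < 1 := by nlinarith
  have hstep := aux_step g n i hg0.le hbound
  -- reduce fract of (n+i)*q*α to fract of (n+i)*g
  have hfr2 : Int.fract ((((n - 1 + (i + 1)) * q : ℕ) : ℝ) * α) =
      Int.fract ((n : ℝ) * g) + (i : ℝ) * g := by
    rw [hnm]
    have he : (((n + i) * q : ℕ) : ℝ) * α =
        ((n + i : ℕ) : ℝ) * g + (((n + i : ℤ) * ⌊(q : ℝ) * α⌋ : ℤ) : ℝ) := by
      have hgval : g = (q : ℝ) * α - (⌊(q : ℝ) * α⌋ : ℝ) := by rw [hg, Int.fract]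
      push_cast
      rw [hgval]
      ring
    rw [he, Int.fract_add_intCast, hstep]
  have hval_l : u' < Int.fract ((n : ℝ) * g) + (i : ℝ) * g := by linarith
  have hval_u : Int.fract ((n : ℝ) * g) + (i : ℝ) * g < v' := by nlinarith
  -- convert pv
  have hpv : pv ((((n - 1 + (i + 1)) * q : ℕ) : ℝ) * θ) =
      2 * π * Int.fract ((((n - 1 + (i + 1)) * q : ℕ) : ℝ) * α) := by
    rw [pv, Int.fract]
    have harg : (((n - 1 + (i + 1)) * q : ℕ) : ℝ) * θ / (2 * π) =
        (((n - 1 + (i + 1)) * q : ℕ) : ℝ) * α := by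
      rw [hαdef]; field_simp
    rw [harg]
    rw [hθα]
    ring
  constructor
  · rw [hpv, hfr2]
    have : u = 2 * π * u' := by rw [hu'def]; field_simp
    rw [this]
    exact (mul_lt_mul_iff_right₀ h2π).mpr hval_l
  · rw [hpv, hfr2]
    have : v = 2 * π * v' := by rw [hv'def]; field_simp
    rw [this]
    exact (mul_lt_mul_iff_right₀ h2π).mpr hval_u
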